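/- Let C ≠ 0, a, b, c be real constants with c ≠ 0, and set f(u) = C·(c+b+u)^(2+2a/c)·(c−b−u)^(2−2a/c), defined for c+b+u > 0 and c−b−u > 0. Let u(t,x) be a smooth real-valued solution of the gKN equation with f, such that u_x(t,x) ≠ 0 and |u(t,x)+b| < c for all (t,x). Then the function P(t,x) = ((u(t,x)+b)² − c²) − 3at·u_t(t,x) − ax·u_x(t,x) satisfies the symmetry determining equation ∂_t P − ∂_x³ P + 3(u_xx/u_x)∂_x² P − (3/2)(u_xx²/u_x²)∂_x P + (f(u)/u_x²)∂_x P − (f'(u)/u_x)P = 0 at every point (t,x). (This is the point symmetry X_{3d} = 3at∂_t + ax∂_x + ((u+b)²−c²)∂_u of the gKN equation.) -/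

import Mathlib

open Real

/-- Partial derivative with respect to the second (spatial) variable. -/
noncomputable def pdx (u : ℝ → ℝ → ℝ) : ℝ → ℝ → ℝ := fun t x => deriv (fun y => u t y) x

/-- Partial derivative with respect to the first (time) variable. -/
noncomputable def pdt (u : ℝ → ℝ → ℝ) : ℝ → ℝ → ℝ := fun t x => deriv (fun s => u s x) t

section infra
variable {g : ℝ → ℝ → ℝ}

lemma pdx_eq_fderiv (hg : ContDiff ℝ (⊤ : ℕ∞) (Function.uncurry g)) (t x : ℝ) :
    pdx g t x = fderiv ℝ (Function.uncurry g) (t, x) (0, 1) := by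
  have h : HasDerivAt (fun y => g t y) (fderiv ℝ (Function.uncurry g) (t, x) (0, 1)) x :=
    ((hg.differentiable (by simp) (t, x)).hasFDerivAt).comp_hasDerivAt x
      ((hasDerivAt_const x t).prodMk (hasDerivAt_id x))
  exact h.deriv

lemma pdt_eq_fderiv (hg : ContDiff ℝ (⊤ : ℕ∞) (Function.uncurry g)) (t x : ℝ) :
    pdt g t x = fderiv ℝ (Function.uncurry g) (t, x) (1, 0) := by
  have h := ((hg.differentiable (by simp) (t, x)).hasFDerivAt).comp_hasDerivAt t
      ((hasDerivAt_id' t).prodMk (hasDerivAt_const t x))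
  exact h.deriv

lemma hasDerivAt_slice_x (hg : ContDiff ℝ (⊤ : ℕ∞) (Function.uncurry g)) (t x : ℝ) :
    HasDerivAt (fun y => g t y) (pdx g t x) x := by
  rw [pdx_eq_fderiv hg]
  exact ((hg.differentiable (by simp) (t, x)).hasFDerivAt).comp_hasDerivAt x
    ((hasDerivAt_const x t).prodMk (hasDerivAt_id x))

lemma hasDerivAt_slice_t (hg : ContDiff ℝ (⊤ : ℕ∞) (Function.uncurry g)) (t x : ℝ) :
    HasDerivAt (fun s => g s x) (pdt g t x) t := by
  rw [pdt_eq_fderiv hg]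
  exact ((hg.differentiable (by simp) (t, x)).hasFDerivAt).comp_hasDerivAt t
    ((hasDerivAt_id t).prodMk (hasDerivAt_const t x))

lemma contDiff_pdx (hg : ContDiff ℝ (⊤ : ℕ∞) (Function.uncurry g)) :
    ContDiff ℝ (⊤ : ℕ∞) (Function.uncurry (pdx g)) := by
  have : Function.uncurry (pdx g) = fun p : ℝ × ℝ => fderiv ℝ (Function.uncurry g) p (0, 1) := by
    funext p
    exact pdx_eq_fderiv hg p.1 p.2
  rw [this]
  exact (hg.fderiv_right (by exact_mod_cast le_top)).clm_apply contDiff_const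

lemma contDiff_pdt (hg : ContDiff ℝ (⊤ : ℕ∞) (Function.uncurry g)) :
    ContDiff ℝ (⊤ : ℕ∞) (Function.uncurry (pdt g)) := by
  have : Function.uncurry (pdt g) = fun p : ℝ × ℝ => fderiv ℝ (Function.uncurry g) p (1, 0) := by
    funext p
    exact pdt_eq_fderiv hg p.1 p.2
  rw [this]
  exact (hg.fderiv_right (by exact_mod_cast le_top)).clm_apply contDiff_const

lemma pdt_pdx_comm (hg : ContDiff ℝ (⊤ : ℕ∞) (Function.uncurry g)) (t x : ℝ) :
    pdt (pdx g) t x = pdx (pdt g) t x := by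
  set U := Function.uncurry g with hU
  have hd1 : Differentiable ℝ (fderiv ℝ U) := (hg.fderiv_right (m := ((⊤:ℕ∞) : WithTop ℕ∞)) (by exact_mod_cast le_top)).differentiable (by simp)
  have hf' : ∀ y, HasFDerivAt U (fderiv ℝ U y) y := fun y =>
    (hg.differentiable (by simp) y).hasFDerivAt
  have hf'' : HasFDerivAt (fderiv ℝ U) (fderiv ℝ (fderiv ℝ U) (t, x)) (t, x) :=
    (hd1 (t, x)).hasFDerivAt
  have hsym := second_derivative_symmetric hf' hf'' ((1 : ℝ), (0 : ℝ)) ((0 : ℝ), (1 : ℝ))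
  have h1 : pdt (pdx g) t x = fderiv ℝ (fderiv ℝ U) (t, x) (1, 0) (0, 1) := by
    have e1 : pdt (pdx g) t x = deriv (fun s => fderiv ℝ U (s, x) (0, 1)) t := by
      have : (fun s => pdx g s x) = fun s => fderiv ℝ U (s, x) (0, 1) :=
        funext fun s => pdx_eq_fderiv hg s x
      exact congrArg (fun F : ℝ → ℝ => deriv F t) this
    have c1 : HasDerivAt (fun s => fderiv ℝ U (s, x)) (fderiv ℝ (fderiv ℝ U) (t, x) (1, 0)) t :=
      hf''.comp_hasDerivAt t ((hasDerivAt_id t).prodMk (hasDerivAt_const t x))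
    have c2 := c1.clm_apply (hasDerivAt_const t ((0 : ℝ), (1 : ℝ)))
    rw [e1, c2.deriv]
    simp
  have h2 : pdx (pdt g) t x = fderiv ℝ (fderiv ℝ U) (t, x) (0, 1) (1, 0) := by
    have e1 : pdx (pdt g) t x = deriv (fun y => fderiv ℝ U (t, y) (1, 0)) x := by
      have : (fun y => pdt g t y) = fun y => fderiv ℝ U (t, y) (1, 0) :=
        funext fun y => pdt_eq_fderiv hg t y
      exact congrArg (fun F : ℝ → ℝ => deriv F x) this
    have c1 : HasDerivAt (fun y => fderiv ℝ U (t, y)) (fderiv ℝ (fderiv ℝ U) (t, x) (0, 1)) x :=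
      hf''.comp_hasDerivAt x ((hasDerivAt_const x t).prodMk (hasDerivAt_id x))
    have c2 := c1.clm_apply (hasDerivAt_const x ((1 : ℝ), (0 : ℝ)))
    rw [e1, c2.deriv]
    simp
  rw [h1, h2, hsym]

end infra

/-- `u` solves the generalized Krichever-Novikov equation with nonlinearity `f`:
`u_t = u_xxx - (3/2) u_xx^2/u_x + f(u)/u_x`. -/
def isGKN (f : ℝ → ℝ) (u : ℝ → ℝ → ℝ) : Prop :=
  ∀ t x, pdt u t x =
    pdx (pdx (pdx u)) t x - (3/2) * (pdx (pdx u) t x)^2 / pdx u t x + f (u t x) / pdx u t x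

/-- The symmetry determining equation for a characteristic function `P` along `u`:
`∂_t P - ∂_x^3 P + 3 (u_xx/u_x) ∂_x^2 P - (3/2)(u_xx^2/u_x^2) ∂_x P + (f(u)/u_x^2) ∂_x P
 - (f'(u)/u_x) P = 0`. -/
def symmDet (f : ℝ → ℝ) (u P : ℝ → ℝ → ℝ) : Prop :=
  ∀ t x,
    pdt P t x - pdx (pdx (pdx P)) t x
      + 3 * (pdx (pdx u) t x / pdx u t x) * pdx (pdx P) t x
      - (3/2) * ((pdx (pdx u) t x)^2 / (pdx u t x)^2) * pdx P t x
      + (f (u t x) / (pdx u t x)^2) * pdx P t x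
      - (deriv f (u t x) / pdx u t x) * P t x = 0

set_option maxHeartbeats 2000000 in
/-- Point symmetry `X₃d = 3at ∂_t + ax ∂_x + ((u+b)²-c²) ∂_u` of the gKN equation with
`f(u) = C (c+b+u)^(2+2a/c) (c-b-u)^(2-2a/c)` (real powers, `|u+b| < c`): its
characteristic `P = ((u+b)²-c²) - 3at u_t - ax u_x` satisfies the symmetry
determining equation. -/
theorem gKN_point_symmetry_X3d (C a b c : ℝ) (hC : C ≠ 0) (hc : c ≠ 0)
    (u : ℝ → ℝ → ℝ) (hu : ContDiff ℝ (⊤ : ℕ∞) (Function.uncurry u))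
    (hux : ∀ t x, pdx u t x ≠ 0)
    (hub : ∀ t x, |u t x + b| < c)
    (hsol : isGKN
      (fun v => C * (c + b + v) ^ ((2 : ℝ) + 2 * a / c) * (c - b - v) ^ ((2 : ℝ) - 2 * a / c)) u) :
    symmDet
      (fun v => C * (c + b + v) ^ ((2 : ℝ) + 2 * a / c) * (c - b - v) ^ ((2 : ℝ) - 2 * a / c)) u
      (fun t x => ((u t x + b)^2 - c^2) - 3 * a * t * pdt u t x - a * x * pdx u t x) := by
  have hu1 : ContDiff ℝ (⊤ : ℕ∞) (Function.uncurry (pdx u)) := contDiff_pdx hu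
  have hu2 : ContDiff ℝ (⊤ : ℕ∞) (Function.uncurry (pdx (pdx u))) := contDiff_pdx hu1
  have hu3 : ContDiff ℝ (⊤ : ℕ∞) (Function.uncurry (pdx (pdx (pdx u)))) := contDiff_pdx hu2
  have hut : ContDiff ℝ (⊤ : ℕ∞) (Function.uncurry (pdt u)) := contDiff_pdt hu
  have hutx : ContDiff ℝ (⊤ : ℕ∞) (Function.uncurry (pdx (pdt u))) := contDiff_pdx hut
  have hutxx : ContDiff ℝ (⊤ : ℕ∞) (Function.uncurry (pdx (pdx (pdt u)))) := contDiff_pdx hutx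
  have comm1 : ∀ t x, pdt (pdx u) t x = pdx (pdt u) t x := pdt_pdx_comm hu
  have comm2 : ∀ t x, pdt (pdx (pdx u)) t x = pdx (pdx (pdt u)) t x := by
    intro t x
    rw [pdt_pdx_comm hu1 t x]
    exact congrArg (fun F : ℝ → ℝ => deriv F x) (funext fun y => comm1 t y)
  have comm3 : ∀ t x, pdt (pdx (pdx (pdx u))) t x = pdx (pdx (pdx (pdt u))) t x := by
    intro t x
    rw [pdt_pdx_comm hu2 t x]
    exact congrArg (fun F : ℝ → ℝ => deriv F x) (funext fun y => comm2 t y)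
  intro t x
  obtain ⟨f, hfdef⟩ : ∃ f : ℝ → ℝ, f = fun v => C * (c + b + v) ^ ((2 : ℝ) + 2 * a / c) * (c - b - v) ^ ((2 : ℝ) - 2 * a / c) := ⟨_, rfl⟩
  rw [← hfdef] at hsol ⊢
  set P : ℝ → ℝ → ℝ := fun t x => ((u t x + b)^2 - c^2) - 3 * a * t * pdt u t x - a * x * pdx u t x with hPdef
  have hA : 0 < c + b + u t x := by
    rcases abs_lt.mp (hub t x) with ⟨h1, h2⟩; linarith
  have hB : 0 < c - b - u t x := by
    rcases abs_lt.mp (hub t x) with ⟨h1, h2⟩; linarith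
  -- derivative of f
  have hfd : HasDerivAt f
      (C * (1 * ((2:ℝ) + 2*a/c) * (c + b + u t x) ^ ((2:ℝ) + 2*a/c - 1)) * (c - b - u t x) ^ ((2:ℝ) - 2*a/c)
        + C * (c + b + u t x) ^ ((2:ℝ) + 2*a/c) * (-1 * ((2:ℝ) - 2*a/c) * (c - b - u t x) ^ ((2:ℝ) - 2*a/c - 1)))
      (u t x) := by
    rw [hfdef]
    have hr1 : HasDerivAt (fun v : ℝ => (c + b + v) ^ ((2:ℝ) + 2*a/c))
        (1 * ((2:ℝ) + 2*a/c) * (c + b + u t x) ^ ((2:ℝ) + 2*a/c - 1)) (u t x) :=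
      ((hasDerivAt_id (u t x)).const_add (c + b)).rpow_const (Or.inl (ne_of_gt hA))
    have hr2 : HasDerivAt (fun v : ℝ => (c - b - v) ^ ((2:ℝ) - 2*a/c))
        (-1 * ((2:ℝ) - 2*a/c) * (c - b - u t x) ^ ((2:ℝ) - 2*a/c - 1)) (u t x) :=
      ((hasDerivAt_id (u t x)).const_sub (c - b)).rpow_const (Or.inl (ne_of_gt hB))
    exact (hr1.const_mul C).mul hr2
  have hfd' : HasDerivAt f (deriv f (u t x)) (u t x) := hfd.differentiableAt.hasDerivAt
  have hfid : deriv f (u t x) * ((u t x + b)^2 - c^2) = f (u t x) * (4*(u t x + b) - 4*a) := by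
    rw [hfd.deriv]
    have hfv : f (u t x) = C * (c + b + u t x) ^ ((2:ℝ) + 2*a/c) * (c - b - u t x) ^ ((2:ℝ) - 2*a/c) := by rw [hfdef]
    rw [hfv]
    rw [show (c + b + u t x) ^ ((2:ℝ) + 2*a/c - 1) = (c + b + u t x) ^ ((2:ℝ) + 2*a/c) / (c + b + u t x) from by
      rw [Real.rpow_sub hA, Real.rpow_one]]
    rw [show (c - b - u t x) ^ ((2:ℝ) - 2*a/c - 1) = (c - b - u t x) ^ ((2:ℝ) - 2*a/c) / (c - b - u t x) from by
      rw [Real.rpow_sub hB, Real.rpow_one]]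
    generalize (c + b + u t x) ^ ((2:ℝ) + 2*a/c) = X
    generalize (c - b - u t x) ^ ((2:ℝ) - 2*a/c) = Y
    field_simp
    ring
  -- first x-derivative of P
  have hPx : ∀ y, pdx P t y
      = 2*(u t y + b)*pdx u t y - 3*a*t*pdx (pdt u) t y - (a*pdx u t y + a*y*pdx (pdx u) t y) := by
    intro y
    have e1 : pdx P t y = deriv (fun z => ((u t z + b)^2 - c^2) - 3*a*t*pdt u t z - a*z*pdx u t z) y := rfl
    have ha := (((hasDerivAt_slice_x hu t y).add_const b).pow 2).sub_const (c^2)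
    have hb := (hasDerivAt_slice_x hut t y).const_mul (3*a*t)
    have hcc := ((hasDerivAt_id y).const_mul a).mul (hasDerivAt_slice_x hu1 t y)
    have H := (ha.sub hb).sub hcc
    rw [e1]
    exact H.deriv.trans (by simp only [id_eq]; norm_num; try ring)
  -- second x-derivative of P
  have hPxx : ∀ y, pdx (pdx P) t y
      = 2*pdx u t y*pdx u t y + 2*(u t y + b)*pdx (pdx u) t y - 3*a*t*pdx (pdx (pdt u)) t y
        - (2*a*pdx (pdx u) t y + a*y*pdx (pdx (pdx u)) t y) := by
    intro y
    have e3 : pdx (pdx P) t y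
        = deriv (fun z => 2*(u t z + b)*pdx u t z - 3*a*t*pdx (pdt u) t z - (a*pdx u t z + a*z*pdx (pdx u) t z)) y :=
      congrArg (fun F : ℝ → ℝ => deriv F y) (funext fun z => hPx z)
    have ha := (((hasDerivAt_slice_x hu t y).add_const b).const_mul 2).mul (hasDerivAt_slice_x hu1 t y)
    have hb := (hasDerivAt_slice_x hutx t y).const_mul (3*a*t)
    have hcc := (hasDerivAt_slice_x hu1 t y).const_mul a
    have hd := ((hasDerivAt_id y).const_mul a).mul (hasDerivAt_slice_x hu2 t y)
    have H := (ha.sub hb).sub (hcc.add hd)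
    rw [e3]
    exact H.deriv.trans (by simp only [id_eq]; norm_num; try ring)
  -- third x-derivative of P
  have hPxxx : pdx (pdx (pdx P)) t x
      = 6*pdx u t x*pdx (pdx u) t x + 2*(u t x + b)*pdx (pdx (pdx u)) t x
        - 3*a*t*pdx (pdx (pdx (pdt u))) t x
        - (3*a*pdx (pdx (pdx u)) t x + a*x*pdx (pdx (pdx (pdx u))) t x) := by
    have e3 : pdx (pdx (pdx P)) t x
        = deriv (fun z => 2*pdx u t z*pdx u t z + 2*(u t z + b)*pdx (pdx u) t z - 3*a*t*pdx (pdx (pdt u)) t z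
            - (2*a*pdx (pdx u) t z + a*z*pdx (pdx (pdx u)) t z)) x :=
      congrArg (fun F : ℝ → ℝ => deriv F x) (funext fun z => hPxx z)
    have ha := ((hasDerivAt_slice_x hu1 t x).const_mul 2).mul (hasDerivAt_slice_x hu1 t x)
    have hb := (((hasDerivAt_slice_x hu t x).add_const b).const_mul 2).mul (hasDerivAt_slice_x hu2 t x)
    have hcc := (hasDerivAt_slice_x hutxx t x).const_mul (3*a*t)
    have hd := (hasDerivAt_slice_x hu2 t x).const_mul (2*a)
    have he := ((hasDerivAt_id x).const_mul a).mul (hasDerivAt_slice_x hu3 t x)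
    have H := ((ha.add hb).sub hcc).sub (hd.add he)
    rw [e3]
    exact H.deriv.trans (by simp only [id_eq]; norm_num; try ring)
  -- t-derivative of P
  have hPt : pdt P t x
      = 2*(u t x + b)*pdt u t x - (3*a*pdt u t x + 3*a*t*pdt (pdt u) t x) - a*x*pdx (pdt u) t x := by
    have e1 : pdt P t x = deriv (fun s => ((u s x + b)^2 - c^2) - 3*a*s*pdt u s x - a*x*pdx u s x) t := rfl
    have ha := (((hasDerivAt_slice_t hu t x).add_const b).pow 2).sub_const (c^2)
    have hb := ((hasDerivAt_id t).const_mul (3*a)).mul (hasDerivAt_slice_t hut t x)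
    have hcc := (hasDerivAt_slice_t hu1 t x).const_mul (a*x)
    have H := (ha.sub hb).sub hcc
    rw [e1]
    refine H.deriv.trans ?_
    rw [comm1 t x]
    simp only [id_eq]; norm_num; try ring
  -- the PDE, with our abbreviations
  have hsolU : ∀ s y, pdt u s y
      = pdx (pdx (pdx u)) s y - (3/2) * (pdx (pdx u) s y)^2 / pdx u s y + f (u s y) / pdx u s y :=
    fun s y => hsol s y
  -- x-derivative of the PDE
  have R2 : pdx (pdt u) t x
      = pdx (pdx (pdx (pdx u))) t x - 3*pdx (pdx u) t x*pdx (pdx (pdx u)) t x/pdx u t x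
        + (3/2)*(pdx (pdx u) t x)^3/(pdx u t x)^2
        + deriv f (u t x) - f (u t x)*pdx (pdx u) t x/(pdx u t x)^2 := by
    have e1 : pdx (pdt u) t x
        = deriv (fun y => pdx (pdx (pdx u)) t y - (3/2) * (pdx (pdx u) t y)^2 / pdx u t y + f (u t y) / pdx u t y) x :=
      congrArg (fun F : ℝ → ℝ => deriv F x) (funext fun y => hsolU t y)
    have d3 := hasDerivAt_slice_x hu3 t x
    have dq := (((hasDerivAt_slice_x hu2 t x).pow 2).const_mul (3/2)).div (hasDerivAt_slice_x hu1 t x) (hux t x)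
    have dfq := (hfd'.comp x (hasDerivAt_slice_x hu t x)).div (hasDerivAt_slice_x hu1 t x) (hux t x)
    have H := (d3.sub dq).add dfq
    rw [e1]
    refine H.deriv.trans ?_
    have h1 : pdx u t x ≠ 0 := hux t x
    simp only [id_eq, Function.comp, Pi.pow_apply]
    push_cast
    field_simp
    ring
  -- t-derivative of the PDE
  have R1 : pdt (pdt u) t x
      = pdx (pdx (pdx (pdt u))) t x - 3*pdx (pdx u) t x*pdx (pdx (pdt u)) t x/pdx u t x
        + (3/2)*(pdx (pdx u) t x)^2*pdx (pdt u) t x/(pdx u t x)^2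
        - f (u t x)*pdx (pdt u) t x/(pdx u t x)^2
        + deriv f (u t x)*pdt u t x/pdx u t x := by
    have e1 : pdt (pdt u) t x
        = deriv (fun s => pdx (pdx (pdx u)) s x - (3/2) * (pdx (pdx u) s x)^2 / pdx u s x + f (u s x) / pdx u s x) t :=
      congrArg (fun F : ℝ → ℝ => deriv F t) (funext fun s => hsolU s x)
    have d3 := hasDerivAt_slice_t hu3 t x
    have dq := (((hasDerivAt_slice_t hu2 t x).pow 2).const_mul (3/2)).div (hasDerivAt_slice_t hu1 t x) (hux t x)
    have dfq := (hfd'.comp t (hasDerivAt_slice_t hu t x)).div (hasDerivAt_slice_t hu1 t x) (hux t x)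
    have H := (d3.sub dq).add dfq
    rw [e1]
    refine H.deriv.trans ?_
    rw [comm1 t x, comm2 t x, comm3 t x]
    have h1 : pdx u t x ≠ 0 := hux t x
    simp only [id_eq, Function.comp, Pi.pow_apply]
    push_cast
    field_simp
    ring
  have hPval : P t x = ((u t x + b)^2 - c^2) - 3*a*t*pdt u t x - a*x*pdx u t x := rfl
  rw [hPt, hPxxx, hPxx x, hPx x, hPval, R1, R2, hsolU t x]
  have h1 : pdx u t x ≠ 0 := hux t x
  field_simp
  linear_combination (-4 * pdx u t x ^ 3) * hfid
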